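/- Conditionally on the design {(D_i, C_i)}, if the errors e_1,…,e_{m+n} are independent and identically distributed with P(e_i > 0) = 1 − τ, then the variance of the linearized statistic is var(T*_τ(m,n)) = {(1−τ)m}^{-2} Σ_{D_i=1} (E[e_i² I(e_i>0)] − (E[e_i I(e_i>0)])²) + τ(1−τ)(C̄_τ(1) − C̄_τ(0))² U_f^{-2} Σ_i (C_i*)² + {(1−τ)n}^{-2} Σ_{D_i=0} (E[e_i² I(e_i>0)] − (E[e_i I(e_i>0)])²); in particular, the covariance cross-terms between the tail-average components and the indicator components vanish because Σ_{D_i=d} C_i* = 0 within each group. -/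

import Mathlib

open MeasureTheory ProbabilityTheory Finset

noncomputable section

variable {Ω : Type*} [MeasurableSpace Ω]

/-- Group-1 indices (`D i = 1`): `i = 0, …, m−1`. -/
def grp1 (m : ℕ) : Finset ℕ := Finset.range m

/-- Group-0 indices (`D i = 0`): `i = m, …, m+n−1`. -/
def grp0 (m n : ℕ) : Finset ℕ := Finset.Ico m (m + n)

/-- Group-centered covariate `C_i* = C_i − N_d⁻¹ Σ_{D_j = D_i} C_j`. -/
def Cstar (m n : ℕ) (C : ℕ → ℝ) (i : ℕ) : ℝ :=
  if i < m then C i - (∑ j ∈ grp1 m, C j) / m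
  else C i - (∑ j ∈ grp0 m n, C j) / n

/-- `U_f = Σ_i f_i C_i*²`, where `f_i` is the conditional density of `e_i` at `0`. -/
def Uf (m n : ℕ) (C f : ℕ → ℝ) : ℝ :=
  ∑ i ∈ Finset.range (m + n), f i * (Cstar m n C i) ^ 2

/-- The linearized COVES statistic `T*_τ(m,n)`. -/
def Tstar (m n : ℕ) (τ δτ : ℝ) (C f : ℕ → ℝ) (Cb1 Cb0 : ℝ)
    (e : ℕ → Ω → ℝ) (ω : Ω) : ℝ :=
  δτ
    + (((1 - τ) * m)⁻¹ * ∑ i ∈ grp1 m, e i ω * (if 0 < e i ω then 1 else 0)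
        - (Cb1 - Cb0) * (Uf m n C f)⁻¹ *
            ∑ i ∈ grp1 m, Cstar m n C i * (if 0 ≤ e i ω then 1 else 0))
    - (((1 - τ) * n)⁻¹ * ∑ i ∈ grp0 m n, e i ω * (if 0 < e i ω then 1 else 0)
        + (Cb1 - Cb0) * (Uf m n C f)⁻¹ *
            ∑ i ∈ grp0 m n, Cstar m n C i * (if 0 ≤ e i ω then 1 else 0))

/-! ### Auxiliary lemmas -/

lemma cstar1 (m n : ℕ) (hm : 0 < m) (C : ℕ → ℝ) :
    ∑ i ∈ grp1 m, Cstar m n C i = 0 := by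
  have h : ∀ i ∈ grp1 m, Cstar m n C i = C i - (∑ j ∈ grp1 m, C j) / m := by
    intro i hi
    simp [Cstar, Finset.mem_range.mp (by simpa [grp1] using hi)]
  rw [Finset.sum_congr rfl h, Finset.sum_sub_distrib, Finset.sum_const]
  have hc : (grp1 m).card = m := by simp [grp1]
  rw [hc, nsmul_eq_mul]
  have hm' : (m : ℝ) ≠ 0 := Nat.cast_ne_zero.mpr hm.ne'
  field_simp
  simp

lemma cstar0 (m n : ℕ) (hn : 0 < n) (C : ℕ → ℝ) :
    ∑ i ∈ grp0 m n, Cstar m n C i = 0 := by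
  have h : ∀ i ∈ grp0 m n, Cstar m n C i = C i - (∑ j ∈ grp0 m n, C j) / n := by
    intro i hi
    have : ¬ i < m := not_lt.mpr (Finset.mem_Ico.mp (by simpa [grp0] using hi)).1
    simp [Cstar, this]
  rw [Finset.sum_congr rfl h, Finset.sum_sub_distrib, Finset.sum_const]
  have hc : (grp0 m n).card = n := by simp [grp0]
  rw [hc, nsmul_eq_mul]
  have hn' : (n : ℝ) ≠ 0 := Nat.cast_ne_zero.mpr hn.ne'
  field_simp
  simp

lemma sum_split (m n : ℕ) (g : ℕ → ℝ) :
    ∑ i ∈ Finset.range (m + n), g i = ∑ i ∈ grp1 m, g i + ∑ i ∈ grp0 m n, g i := by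
  rw [grp1, grp0, Finset.range_eq_Ico,
    ← Finset.sum_Ico_consecutive _ (Nat.zero_le m) (Nat.le_add_right m n)]
  rw [Finset.range_eq_Ico]

lemma variance_const_add' (P : Measure Ω) [IsProbabilityMeasure P] (c : ℝ) (X : Ω → ℝ)
    (hX : Integrable X P) : variance (fun ω => c + X ω) P = variance X P := by
  unfold variance evariance
  congr 1
  refine lintegral_congr fun ω => ?_
  have h : ∫ ω, (c + X ω) ∂P = c + ∫ ω, X ω ∂P := by
    rw [integral_add (integrable_const c) hX, integral_const]
    simp
  rw [h]
  ring_nf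

lemma meas_phi_gt : Measurable (fun x : ℝ => x * (if 0 < x then (1:ℝ) else 0)) := by
  apply measurable_id.mul
  exact Measurable.ite measurableSet_Ioi measurable_const measurable_const

lemma meas_phi_ge : Measurable (fun x : ℝ => (if 0 ≤ x then (1:ℝ) else 0)) :=
  Measurable.ite measurableSet_Ici measurable_const measurable_const

lemma memLp_u (P : Measure Ω) {X : Ω → ℝ} (hX : Measurable X)
    (hint2 : Integrable (fun ω => (X ω) ^ 2 * (if 0 < X ω then 1 else 0)) P) :
    MemLp (fun ω => X ω * (if 0 < X ω then 1 else 0)) 2 P := by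
  have hmu : Measurable fun ω => X ω * (if 0 < X ω then (1:ℝ) else 0) := meas_phi_gt.comp hX
  rw [memLp_two_iff_integrable_sq hmu.aestronglyMeasurable]
  have h : (fun ω => (X ω * (if 0 < X ω then (1:ℝ) else 0)) ^ 2)
      = fun ω => (X ω) ^ 2 * (if 0 < X ω then 1 else 0) := by
    funext ω; by_cases h : 0 < X ω <;> simp [h]
  rw [h]; exact hint2

lemma memLp_v (P : Measure Ω) [IsFiniteMeasure P] {X : Ω → ℝ} (hX : Measurable X) :
    MemLp (fun ω => (if 0 ≤ X ω then (1:ℝ) else 0)) 2 P := by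
  have hmv : Measurable fun ω => (if 0 ≤ X ω then (1:ℝ) else 0) := meas_phi_ge.comp hX
  apply MemLp.of_bound hmv.aestronglyMeasurable 1
  filter_upwards with ω
  by_cases h : 0 ≤ X ω <;> simp [h]

lemma int_v (P : Measure Ω) {X : Ω → ℝ} {τ : ℝ} (hX : Measurable X)
    (htail : (P {ω | 0 < X ω}).toReal = 1 - τ) (hcont : P {ω | X ω = 0} = 0) :
    ∫ ω, (if 0 ≤ X ω then (1:ℝ) else 0) ∂P = 1 - τ := by
  have hset : {ω | 0 ≤ X ω} = {ω | 0 < X ω} ∪ {ω | X ω = 0} := by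
    ext ω; simp only [Set.mem_setOf_eq, Set.mem_union]
    constructor
    · intro h; rcases h.lt_or_eq with h' | h'
      · exact Or.inl h'
      · exact Or.inr h'.symm
    · rintro (h | h); exacts [le_of_lt h, le_of_eq h.symm]
  have hmeq : P {ω | 0 ≤ X ω} = P {ω | 0 < X ω} := by
    rw [hset]
    refine le_antisymm ?_ (measure_mono Set.subset_union_left)
    calc P ({ω | 0 < X ω} ∪ {ω | X ω = 0}) ≤ P {ω | 0 < X ω} + P {ω | X ω = 0} :=
          measure_union_le _ _
      _ = P {ω | 0 < X ω} := by rw [hcont, add_zero]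
  have hms : MeasurableSet {ω | 0 ≤ X ω} := hX measurableSet_Ici
  calc ∫ ω, (if 0 ≤ X ω then (1:ℝ) else 0) ∂P
      = ∫ ω, Set.indicator {ω | 0 ≤ X ω} (fun _ => (1:ℝ)) ω ∂P :=
        integral_congr_ae (.of_forall fun ω => by simp [Set.indicator_apply])
    _ = (P {ω | 0 ≤ X ω}).toReal := integral_indicator_one hms
    _ = 1 - τ := by rw [hmeq, htail]

lemma var_one (P : Measure Ω) [IsProbabilityMeasure P] {X : Ω → ℝ} (hX : Measurable X)
    (τ s c : ℝ)
    (htail : (P {ω | 0 < X ω}).toReal = 1 - τ) (hcont : P {ω | X ω = 0} = 0)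
    (hint2 : Integrable (fun ω => (X ω) ^ 2 * (if 0 < X ω then 1 else 0)) P) :
    variance (fun ω => s * (X ω * (if 0 < X ω then 1 else 0))
        - c * (if 0 ≤ X ω then 1 else 0)) P
      = s ^ 2 * ((∫ ω, (X ω) ^ 2 * (if 0 < X ω then 1 else 0) ∂P)
            - (∫ ω, X ω * (if 0 < X ω then 1 else 0) ∂P) ^ 2)
        + c ^ 2 * (τ * (1 - τ))
        - 2 * s * c * (∫ ω, X ω * (if 0 < X ω then 1 else 0) ∂P) * τ := by
  have hu := memLp_u P hX hint2
  have hv := memLp_v P hX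
  have hui : Integrable (fun ω => X ω * (if 0 < X ω then (1:ℝ) else 0)) P :=
    hu.integrable one_le_two
  have hvi : Integrable (fun ω => (if 0 ≤ X ω then (1:ℝ) else 0)) P :=
    hv.integrable one_le_two
  have hY : MemLp (fun ω => s * (X ω * (if 0 < X ω then 1 else 0))
      - c * (if 0 ≤ X ω then 1 else 0)) 2 P := (hu.const_mul s).sub (hv.const_mul c)
  rw [variance_eq_sub hY]
  have hIY : ∫ ω, (s * (X ω * (if 0 < X ω then 1 else 0))
      - c * (if 0 ≤ X ω then 1 else 0)) ∂P
      = s * (∫ ω, X ω * (if 0 < X ω then 1 else 0) ∂P) - c * (1 - τ) := by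
    rw [integral_sub (hui.const_mul s) (hvi.const_mul c), integral_const_mul,
      integral_const_mul, int_v P hX htail hcont]
  have hsq : ∀ ω, (s * (X ω * (if 0 < X ω then (1:ℝ) else 0))
        - c * (if 0 ≤ X ω then 1 else 0)) ^ 2
      = s ^ 2 * ((X ω) ^ 2 * (if 0 < X ω then 1 else 0))
        - (2 * s * c) * (X ω * (if 0 < X ω then 1 else 0))
        + c ^ 2 * (if 0 ≤ X ω then 1 else 0) := by
    intro ω
    by_cases h1 : 0 < X ω
    · have h2 : 0 ≤ X ω := le_of_lt h1
      simp only [h1, h2, if_true]; ring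
    · by_cases h2 : 0 ≤ X ω
      · simp only [h1, h2, if_true, if_false]; ring
      · simp only [h1, h2, if_false]; ring
  have hIY2 : ∫ ω, (s * (X ω * (if 0 < X ω then 1 else 0))
        - c * (if 0 ≤ X ω then 1 else 0)) ^ 2 ∂P
      = s ^ 2 * (∫ ω, (X ω) ^ 2 * (if 0 < X ω then 1 else 0) ∂P)
        - (2 * s * c) * (∫ ω, X ω * (if 0 < X ω then 1 else 0) ∂P)
        + c ^ 2 * (1 - τ) := by
    rw [integral_congr_ae (.of_forall hsq)]
    have h1 : Integrable (fun ω => s ^ 2 * ((X ω) ^ 2 * (if 0 < X ω then (1:ℝ) else 0))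
        - (2 * s * c) * (X ω * (if 0 < X ω then 1 else 0))) P :=
      Integrable.sub (hint2.const_mul _) (hui.const_mul _)
    calc ∫ ω, (s ^ 2 * ((X ω) ^ 2 * (if 0 < X ω then 1 else 0))
          - (2 * s * c) * (X ω * (if 0 < X ω then 1 else 0))
          + c ^ 2 * (if 0 ≤ X ω then 1 else 0)) ∂P
        = (∫ ω, (s ^ 2 * ((X ω) ^ 2 * (if 0 < X ω then 1 else 0))
            - (2 * s * c) * (X ω * (if 0 < X ω then 1 else 0))) ∂P)
          + ∫ ω, c ^ 2 * (if 0 ≤ X ω then (1:ℝ) else 0) ∂P :=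
          integral_add h1 (hvi.const_mul _)
      _ = s ^ 2 * (∫ ω, (X ω) ^ 2 * (if 0 < X ω then 1 else 0) ∂P)
            - (2 * s * c) * (∫ ω, X ω * (if 0 < X ω then 1 else 0) ∂P)
            + c ^ 2 * (1 - τ) := by
          rw [integral_sub (hint2.const_mul _) (hui.const_mul _), integral_const_mul,
            integral_const_mul, integral_const_mul, int_v P hX htail hcont]
  simp only [Pi.pow_apply]
  rw [hIY2, hIY]
  ring

/-- scale coefficient -/
def sAux (m n : ℕ) (τ : ℝ) (i : ℕ) : ℝ :=
  if i < m then ((1 - τ) * m)⁻¹ else -(((1 - τ) * n)⁻¹)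

/-- summand random variables -/
def Yaux (m n : ℕ) (τ k : ℝ) (C : ℕ → ℝ) (e : ℕ → Ω → ℝ) (i : ℕ) : Ω → ℝ :=
  fun ω => sAux m n τ i * (e i ω * (if 0 < e i ω then 1 else 0))
    - (k * Cstar m n C i) * (if 0 ≤ e i ω then 1 else 0)

/-- Conditionally on the design `{(D_i, C_i)}` (here fixed), if the errors
`e_1, …, e_{m+n}` are i.i.d. with `P(e_i > 0) = 1 − τ` (and continuously distributed, so
`P(e_i = 0) = 0`) and `E[e_i² I(e_i>0)] < ∞`, then the variance of the linearized statistic is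
`var(T*) = {(1−τ)m}⁻² Σ_{D_i=1}(E[e_i²I(e_i>0)] − (E[e_iI(e_i>0)])²)`
`+ τ(1−τ)(C̄_τ(1)−C̄_τ(0))² U_f⁻² Σ_i C_i*²`
`+ {(1−τ)n}⁻² Σ_{D_i=0}(E[e_i²I(e_i>0)] − (E[e_iI(e_i>0)])²)`;
in particular, the covariance cross-terms vanish because `Σ_{D_i=d} C_i* = 0` within
each group. -/
theorem coves_linearized_variance
    (P : Measure Ω) [IsProbabilityMeasure P]
    (m n : ℕ) (hm : 0 < m) (hn : 0 < n)
    (τ δτ : ℝ) (hτ : τ ∈ Set.Ioo (0 : ℝ) 1)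
    (C f : ℕ → ℝ) (Cb1 Cb0 : ℝ)
    (e : ℕ → Ω → ℝ) (hmeas : ∀ i, Measurable (e i))
    (hindep : iIndepFun e P)
    (hident : ∀ i j, IdentDistrib (e i) (e j) P P)
    (htail : ∀ i ∈ Finset.range (m + n), (P {ω | 0 < e i ω}).toReal = 1 - τ)
    (hcont : ∀ i ∈ Finset.range (m + n), P {ω | e i ω = 0} = 0)
    (hint2 : ∀ i ∈ Finset.range (m + n),
      Integrable (fun ω => (e i ω) ^ 2 * (if 0 < e i ω then 1 else 0)) P) :
    variance (Tstar m n τ δτ C f Cb1 Cb0 e) P =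
        (((1 - τ) * m) ^ 2)⁻¹ *
          ∑ i ∈ grp1 m,
            ((∫ ω, (e i ω) ^ 2 * (if 0 < e i ω then 1 else 0) ∂P)
              - (∫ ω, e i ω * (if 0 < e i ω then 1 else 0) ∂P) ^ 2)
      + τ * (1 - τ) * (Cb1 - Cb0) ^ 2 * ((Uf m n C f) ^ 2)⁻¹ *
          ∑ i ∈ Finset.range (m + n), (Cstar m n C i) ^ 2
      + (((1 - τ) * n) ^ 2)⁻¹ *
          ∑ i ∈ grp0 m n,
            ((∫ ω, (e i ω) ^ 2 * (if 0 < e i ω then 1 else 0) ∂P)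
              - (∫ ω, e i ω * (if 0 < e i ω then 1 else 0) ∂P) ^ 2) ∧
      (∑ i ∈ grp1 m, Cstar m n C i = 0 ∧ ∑ i ∈ grp0 m n, Cstar m n C i = 0) := by
  have h1 : ∑ i ∈ grp1 m, Cstar m n C i = 0 := cstar1 m n hm C
  have h0 : ∑ i ∈ grp0 m n, Cstar m n C i = 0 := cstar0 m n hn C
  refine ⟨?_, h1, h0⟩
  set k : ℝ := (Cb1 - Cb0) * (Uf m n C f)⁻¹ with hk
  -- membership in MemLp 2
  have hYmem : ∀ i ∈ Finset.range (m + n), MemLp (Yaux m n τ k C e i) 2 P := by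
    intro i hi
    exact ((memLp_u P (hmeas i) (hint2 i hi)).const_mul _).sub
      ((memLp_v P (hmeas i)).const_mul _)
  -- rewrite Tstar as a constant plus a sum
  have hTeq : Tstar m n τ δτ C f Cb1 Cb0 e
      = fun ω => δτ + ∑ i ∈ Finset.range (m + n), Yaux m n τ k C e i ω := by
    funext ω
    rw [sum_split m n (fun i => Yaux m n τ k C e i ω)]
    have e1 : ∑ i ∈ grp1 m, Yaux m n τ k C e i ω
        = ((1 - τ) * m)⁻¹ * ∑ i ∈ grp1 m, e i ω * (if 0 < e i ω then 1 else 0)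
          - k * ∑ i ∈ grp1 m, Cstar m n C i * (if 0 ≤ e i ω then 1 else 0) := by
      rw [Finset.mul_sum, Finset.mul_sum, ← Finset.sum_sub_distrib]
      refine Finset.sum_congr rfl fun i hi => ?_
      have him : i < m := Finset.mem_range.mp (by simpa [grp1] using hi)
      simp only [Yaux, sAux, if_pos him]
      ring
    have e0 : ∑ i ∈ grp0 m n, Yaux m n τ k C e i ω
        = -(((1 - τ) * n)⁻¹ * ∑ i ∈ grp0 m n, e i ω * (if 0 < e i ω then 1 else 0))
          - k * ∑ i ∈ grp0 m n, Cstar m n C i * (if 0 ≤ e i ω then 1 else 0) := by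
      rw [Finset.mul_sum, Finset.mul_sum, ← Finset.sum_neg_distrib,
        ← Finset.sum_sub_distrib]
      refine Finset.sum_congr rfl fun i hi => ?_
      have him : ¬ i < m := not_lt.mpr (Finset.mem_Ico.mp (by simpa [grp0] using hi)).1
      simp only [Yaux, sAux, if_neg him]
      ring
    rw [e1, e0]
    simp only [Tstar]
    ring
  -- variance of the sum
  have hvar1 : variance (Tstar m n τ δτ C f Cb1 Cb0 e) P
      = ∑ i ∈ Finset.range (m + n), variance (Yaux m n τ k C e i) P := by
    rw [hTeq, variance_const_add' P δτ _
      (integrable_finset_sum _ fun i hi => (hYmem i hi).integrable one_le_two)]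
    have hfun : (fun ω => ∑ i ∈ Finset.range (m + n), Yaux m n τ k C e i ω)
        = ∑ i ∈ Finset.range (m + n), Yaux m n τ k C e i := by
      funext ω; simp
    rw [hfun]
    refine IndepFun.variance_sum hYmem ?_
    intro i _ j _ hij
    have hφ : ∀ l : ℕ, Measurable (fun x : ℝ =>
        sAux m n τ l * (x * (if 0 < x then 1 else 0))
          - (k * Cstar m n C l) * (if 0 ≤ x then 1 else 0)) :=
      fun l => (meas_phi_gt.const_mul _).sub (meas_phi_ge.const_mul _)
    exact (hindep.indepFun hij).comp (hφ i) (hφ j)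
  -- the common first tail moment
  set μ1 : ℝ := ∫ ω, e 0 ω * (if 0 < e 0 ω then 1 else 0) ∂P with hμ1def
  have hM1 : ∀ i, (∫ ω, e i ω * (if 0 < e i ω then 1 else 0) ∂P) = μ1 :=
    fun i => IdentDistrib.integral_eq ((hident i 0).comp meas_phi_gt)
  -- per-summand variance
  have hvar2 : ∀ i ∈ Finset.range (m + n), variance (Yaux m n τ k C e i) P
      = (sAux m n τ i) ^ 2 *
          ((∫ ω, (e i ω) ^ 2 * (if 0 < e i ω then 1 else 0) ∂P) - μ1 ^ 2)
        + k ^ 2 * (τ * (1 - τ)) * (Cstar m n C i) ^ 2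
        - (2 * k * τ * μ1) * (sAux m n τ i * Cstar m n C i) := by
    intro i hi
    have h := var_one P (hmeas i) τ (sAux m n τ i) (k * Cstar m n C i)
      (htail i hi) (hcont i hi) (hint2 i hi)
    rw [hM1 i] at h
    rw [show Yaux m n τ k C e i = fun ω =>
        sAux m n τ i * (e i ω * (if 0 < e i ω then 1 else 0))
          - (k * Cstar m n C i) * (if 0 ≤ e i ω then 1 else 0) from rfl, h]
    ring
  rw [hvar1, Finset.sum_congr rfl hvar2]
  -- rewrite the target's per-index first moments as μ1
  have hR1 : ∑ i ∈ grp1 m,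
        ((∫ ω, (e i ω) ^ 2 * (if 0 < e i ω then 1 else 0) ∂P)
          - (∫ ω, e i ω * (if 0 < e i ω then 1 else 0) ∂P) ^ 2)
      = ∑ i ∈ grp1 m,
        ((∫ ω, (e i ω) ^ 2 * (if 0 < e i ω then 1 else 0) ∂P) - μ1 ^ 2) :=
    Finset.sum_congr rfl fun i _ => by rw [hM1 i]
  have hR0 : ∑ i ∈ grp0 m n,
        ((∫ ω, (e i ω) ^ 2 * (if 0 < e i ω then 1 else 0) ∂P)
          - (∫ ω, e i ω * (if 0 < e i ω then 1 else 0) ∂P) ^ 2)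
      = ∑ i ∈ grp0 m n,
        ((∫ ω, (e i ω) ^ 2 * (if 0 < e i ω then 1 else 0) ∂P) - μ1 ^ 2) :=
    Finset.sum_congr rfl fun i _ => by rw [hM1 i]
  rw [hR1, hR0]
  rw [sum_split m n (fun i => (sAux m n τ i) ^ 2 *
        ((∫ ω, (e i ω) ^ 2 * (if 0 < e i ω then 1 else 0) ∂P) - μ1 ^ 2)
      + k ^ 2 * (τ * (1 - τ)) * (Cstar m n C i) ^ 2
      - (2 * k * τ * μ1) * (sAux m n τ i * Cstar m n C i))]
  -- group 1 part
  have g1 : ∑ i ∈ grp1 m, ((sAux m n τ i) ^ 2 *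
        ((∫ ω, (e i ω) ^ 2 * (if 0 < e i ω then 1 else 0) ∂P) - μ1 ^ 2)
      + k ^ 2 * (τ * (1 - τ)) * (Cstar m n C i) ^ 2
      - (2 * k * τ * μ1) * (sAux m n τ i * Cstar m n C i))
      = (((1 - τ) * m)⁻¹) ^ 2 * ∑ i ∈ grp1 m,
          ((∫ ω, (e i ω) ^ 2 * (if 0 < e i ω then 1 else 0) ∂P) - μ1 ^ 2)
        + k ^ 2 * (τ * (1 - τ)) * ∑ i ∈ grp1 m, (Cstar m n C i) ^ 2 := by
    have hc : ∀ i ∈ grp1 m, ((sAux m n τ i) ^ 2 *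
          ((∫ ω, (e i ω) ^ 2 * (if 0 < e i ω then 1 else 0) ∂P) - μ1 ^ 2)
        + k ^ 2 * (τ * (1 - τ)) * (Cstar m n C i) ^ 2
        - (2 * k * τ * μ1) * (sAux m n τ i * Cstar m n C i))
        = (((1 - τ) * m)⁻¹) ^ 2 *
            ((∫ ω, (e i ω) ^ 2 * (if 0 < e i ω then 1 else 0) ∂P) - μ1 ^ 2)
          + k ^ 2 * (τ * (1 - τ)) * (Cstar m n C i) ^ 2
          - (2 * k * τ * μ1 * ((1 - τ) * m)⁻¹) * Cstar m n C i := by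
      intro i hi
      have him : i < m := Finset.mem_range.mp (by simpa [grp1] using hi)
      simp only [sAux, if_pos him]
      ring
    rw [Finset.sum_congr rfl hc, Finset.sum_sub_distrib, Finset.sum_add_distrib,
      ← Finset.mul_sum, ← Finset.mul_sum, ← Finset.mul_sum, h1, mul_zero, sub_zero]
  -- group 0 part
  have g0 : ∑ i ∈ grp0 m n, ((sAux m n τ i) ^ 2 *
        ((∫ ω, (e i ω) ^ 2 * (if 0 < e i ω then 1 else 0) ∂P) - μ1 ^ 2)
      + k ^ 2 * (τ * (1 - τ)) * (Cstar m n C i) ^ 2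
      - (2 * k * τ * μ1) * (sAux m n τ i * Cstar m n C i))
      = (((1 - τ) * n)⁻¹) ^ 2 * ∑ i ∈ grp0 m n,
          ((∫ ω, (e i ω) ^ 2 * (if 0 < e i ω then 1 else 0) ∂P) - μ1 ^ 2)
        + k ^ 2 * (τ * (1 - τ)) * ∑ i ∈ grp0 m n, (Cstar m n C i) ^ 2 := by
    have hc : ∀ i ∈ grp0 m n, ((sAux m n τ i) ^ 2 *
          ((∫ ω, (e i ω) ^ 2 * (if 0 < e i ω then 1 else 0) ∂P) - μ1 ^ 2)
        + k ^ 2 * (τ * (1 - τ)) * (Cstar m n C i) ^ 2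
        - (2 * k * τ * μ1) * (sAux m n τ i * Cstar m n C i))
        = (((1 - τ) * n)⁻¹) ^ 2 *
            ((∫ ω, (e i ω) ^ 2 * (if 0 < e i ω then 1 else 0) ∂P) - μ1 ^ 2)
          + k ^ 2 * (τ * (1 - τ)) * (Cstar m n C i) ^ 2
          - (-(2 * k * τ * μ1 * ((1 - τ) * n)⁻¹)) * Cstar m n C i := by
      intro i hi
      have him : ¬ i < m := not_lt.mpr (Finset.mem_Ico.mp (by simpa [grp0] using hi)).1
      simp only [sAux, if_neg him]
      ring
    rw [Finset.sum_congr rfl hc, Finset.sum_sub_distrib, Finset.sum_add_distrib,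
      ← Finset.mul_sum, ← Finset.mul_sum, ← Finset.mul_sum, h0, mul_zero, sub_zero]
  rw [g1, g0, sum_split m n (fun i => (Cstar m n C i) ^ 2), hk,
    inv_pow ((1 - τ) * (m : ℝ)) 2, inv_pow ((1 - τ) * (n : ℝ)) 2]
  ring
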